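/- The logarithmic potential Φ is differentiable at every v with v_i ≠ 0 for all i, its gradient is ∇Φ(v) = (b_i / |v_i|)_{i=1}^n = D(v)⁻¹ b, and this gradient lies in the kernel of the Jacobian of f at v, i.e., A (D(v) ∇Φ(v)) = 0; hence the level sets of Φ are orthogonal to the constant-task fibers at every regular state. -/

import Mathlib

/-- The logarithmic potential Φ is differentiable at every regular state, its
gradient is D(v)⁻¹ b, and this gradient lies in the kernel of the Jacobian of f. -/
theorem stmt_12 (m : ℕ) (hm : 1 ≤ m)
    (A : Matrix (Fin m) (Fin (m + 1)) ℝ)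
    (f : (Fin (m + 1) → ℝ) → Fin m → ℝ)
    (hf : ∀ v j, f v j = ∑ i, A j i * (v i * |v i|))
    (b : Fin (m + 1) → ℝ) (hb0 : b ≠ 0)
    (hbker : ∀ j, ∑ i, A j i * b i = 0)
    (hbi : ∀ i, b i ≠ 0)
    (Φ : (Fin (m + 1) → ℝ) → ℝ)
    (hΦ : ∀ v, Φ v = ∑ i, b i * Real.sign (v i) * Real.log |v i|) :
    ∀ v : Fin (m + 1) → ℝ, (∀ i, v i ≠ 0) →
      DifferentiableAt ℝ Φ v ∧
      (∀ u : Fin (m + 1) → ℝ, fderiv ℝ Φ v u = ∑ i, (b i / |v i|) * u i) ∧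
      (∀ j, ∑ i, A j i * (|v i| * (b i / |v i|)) = 0) := by
  intro v hv
  set L : (Fin (m + 1) → ℝ) →L[ℝ] ℝ :=
    ∑ i, (b i * Real.sign (v i)) • ((v i)⁻¹ • ContinuousLinearMap.proj i) with hL
  -- derivative of fixed-sign version
  have hg : HasFDerivAt (fun x : Fin (m + 1) → ℝ =>
      ∑ i, b i * Real.sign (v i) * Real.log |x i|) L v := by
    rw [hL]
    apply HasFDerivAt.fun_sum
    intro i _
    have hproj := hasFDerivAt_apply (𝕜 := ℝ) i v
    have hlog : HasFDerivAt (fun x : Fin (m + 1) → ℝ => Real.log (x i))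
        ((v i)⁻¹ • (ContinuousLinearMap.proj i : (Fin (m + 1) → ℝ) →L[ℝ] ℝ)) v :=
      by have := (Real.hasDerivAt_log (hv i)).comp_hasFDerivAt v hproj; exact this
    have := hlog.const_mul (b i * Real.sign (v i))
    simpa [Real.log_abs] using this
  -- Φ agrees with the fixed-sign version near v
  have heq : Φ =ᶠ[nhds v] (fun x : Fin (m + 1) → ℝ =>
      ∑ i, b i * Real.sign (v i) * Real.log |x i|) := by
    have hall : ∀ᶠ x : Fin (m + 1) → ℝ in nhds v,
        ∀ i, Real.sign (x i) = Real.sign (v i) := by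
      rw [Filter.eventually_all]
      intro i
      rcases (hv i).lt_or_gt with h1 | h1
      · have hopen : IsOpen {x : Fin (m + 1) → ℝ | x i < 0} :=
          isOpen_lt (continuous_apply i) continuous_const
        filter_upwards [hopen.mem_nhds h1] with x hx
        rw [Real.sign_of_neg hx, Real.sign_of_neg h1]
      · have hopen : IsOpen {x : Fin (m + 1) → ℝ | 0 < x i} :=
          isOpen_lt continuous_const (continuous_apply i)
        filter_upwards [hopen.mem_nhds h1] with x hx
        rw [Real.sign_of_pos hx, Real.sign_of_pos h1]
    filter_upwards [hall] with x hx
    rw [hΦ]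
    exact Finset.sum_congr rfl fun i _ => by rw [hx i]
  have hΦder : HasFDerivAt Φ L v := hg.congr_of_eventuallyEq heq
  have hkey : ∀ i, b i * Real.sign (v i) * (v i)⁻¹ = b i / |v i| := by
    intro i
    rcases (hv i).lt_or_gt with h1 | h1
    · rw [Real.sign_of_neg h1, abs_of_neg h1]
      field_simp
    · rw [Real.sign_of_pos h1, abs_of_pos h1]
      ring
  refine ⟨hΦder.differentiableAt, ?_, ?_⟩
  · intro u
    rw [hΦder.fderiv, hL]
    simp only [ContinuousLinearMap.sum_apply, ContinuousLinearMap.smul_apply,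
      ContinuousLinearMap.proj_apply, smul_eq_mul]
    exact Finset.sum_congr rfl fun i _ => by rw [← hkey i]; ring
  · intro j
    have : ∀ i : Fin (m + 1), |v i| * (b i / |v i|) = b i := by
      intro i
      have : |v i| ≠ 0 := abs_ne_zero.mpr (hv i)
      field_simp
    calc ∑ i, A j i * (|v i| * (b i / |v i|)) = ∑ i, A j i * b i :=
          Finset.sum_congr rfl fun i _ => by rw [this i]
      _ = 0 := hbker j
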